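/- If x = Σ_{i∈F} c_i e_i is an (n,ε)-basic special convex combination with 0 < ε < 1/2, and for i ∈ F ∖ {min F} we set c_i' = c_i / (Σ_{j∈F∖{min F}} c_j), then y = Σ_{i∈F∖{min F}} c_i' e_i is an (n,2ε)-basic special convex combination. -/

import Mathlib

/-- The Schreier families `S_n` of finite subsets of `ℕ`, defined inductively.
`S_0` consists of singletons and the empty set; `S_{n+1}` consists of unions
`F_1 ∪ ⋯ ∪ F_k` of successive nonempty members of `S_n` with `k ≤ min F_1`
(equivalently `k ≤ a` for every `a ∈ F`), together with the empty set. -/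
def Schreier : ℕ → Set (Finset ℕ)
  | 0 => {F | F.card ≤ 1}
  | n + 1 => {F | ∃ (k : ℕ) (G : Fin k → Finset ℕ),
      (∀ i, G i ∈ Schreier n) ∧
      (∀ i, (G i).Nonempty) ∧
      (∀ i j : Fin k, i < j → ∀ a ∈ G i, ∀ b ∈ G j, a < b) ∧
      F = Finset.univ.biUnion G ∧
      (∀ a ∈ F, k ≤ a)}

/-- `x = ∑_{k∈F} c_k e_k` is an `(n,ε)`-basic special convex combination. -/
def IsBasicSCC (n : ℕ) (ε : ℝ) (F : Finset ℕ) (c : ℕ → ℝ) : Prop :=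
  F ∈ Schreier n ∧ (∀ k ∈ F, 0 ≤ c k) ∧ (∑ k ∈ F, c k = 1) ∧
    ∀ G ⊆ F, G ∈ Schreier (n - 1) → ∑ k ∈ G, c k < ε

/-- If `x = ∑_{i∈F} c_i e_i` is an `(n,ε)`-basic s.c.c. with `0 < ε < 1/2`
(and `F` has at least two elements), then removing `min F` and renormalizing
the coefficients by `c_i' = c_i / ∑_{j ∈ F \ {min F}} c_j` yields an
`(n,2ε)`-basic s.c.c. -/
lemma schreier_subset_closed : ∀ (n : ℕ) (F S : Finset ℕ), S ⊆ F → F ∈ Schreier n → S ∈ Schreier n := by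
  intro n
  induction n with
  | zero =>
    intro F S hSF hF
    exact le_trans (Finset.card_le_card hSF) hF
  | succ n ih =>
    rintro F S hSF ⟨k, G, hG, hGne, hsucc, rfl, hk⟩
    classical
    set idx : Finset (Fin k) := Finset.univ.filter (fun i => ((G i) ∩ S).Nonempty) with hidx
    set e := idx.orderIsoOfFin (rfl : idx.card = idx.card) with he
    refine ⟨idx.card, fun j => G (e j) ∩ S, ?_, ?_, ?_, ?_, ?_⟩
    · intro j
      exact ih (G (e j)) _ Finset.inter_subset_left (hG _)
    · intro j
      have h2 : (e j : Fin k) ∈ idx := (e j).2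
      exact (Finset.mem_filter.1 h2).2
    · intro i j hij a ha b hb
      have : (e i : Fin k) < (e j : Fin k) := by
        exact_mod_cast e.strictMono hij
      exact hsucc _ _ this a (Finset.mem_of_mem_inter_left ha) b (Finset.mem_of_mem_inter_left hb)
    · ext a
      constructor
      · intro haS
        obtain ⟨i, _, hai⟩ := Finset.mem_biUnion.1 (hSF haS)
        have hi : i ∈ idx :=
          Finset.mem_filter.2 ⟨Finset.mem_univ _, ⟨a, Finset.mem_inter.2 ⟨hai, haS⟩⟩⟩
        refine Finset.mem_biUnion.2 ⟨e.symm ⟨i, hi⟩, Finset.mem_univ _, ?_⟩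
        rw [Finset.mem_inter]
        refine ⟨?_, haS⟩
        have hee : (e (e.symm ⟨i, hi⟩) : Fin k) = i := by simp
        rw [hee]; exact hai
      · intro h
        obtain ⟨j, _, hj⟩ := Finset.mem_biUnion.1 h
        exact (Finset.mem_inter.1 hj).2
    · intro a ha
      have h1 : k ≤ a := hk a (hSF ha)
      have h2 : idx.card ≤ k := by
        calc idx.card ≤ (Finset.univ : Finset (Fin k)).card := Finset.card_filter_le _ _
        _ = k := by simp
      omega

lemma singleton_mem_Schreier (m a : ℕ) (ha : 1 ≤ a) : ({a} : Finset ℕ) ∈ Schreier m := by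
  induction m with
  | zero => simp [Schreier]
  | succ m ih =>
    refine ⟨1, fun _ => {a}, fun _ => ih, fun _ => ⟨a, by simp⟩, ?_, by simp, ?_⟩
    · intro i j hij
      rw [Subsingleton.elim i j] at hij
      exact absurd hij (lt_irrefl j)
    · intro b hb
      simp at hb
      omega

lemma Schreier_pos {n : ℕ} {F : Finset ℕ} (h : F ∈ Schreier (n+1)) {a : ℕ} (ha : a ∈ F) : 1 ≤ a := by
  obtain ⟨k, G, _, _, _, rfl, hk⟩ := h
  have hka := hk a ha
  rw [Finset.mem_biUnion] at ha
  obtain ⟨i, _, _⟩ := ha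
  have := i.pos
  omega

theorem basicSCC_erase_min (n : ℕ) (ε : ℝ) (hε₀ : 0 < ε) (hε : ε < 1 / 2)
    (F : Finset ℕ) (c : ℕ → ℝ) (hF : 1 < F.card) (hne : F.Nonempty)
    (hscc : IsBasicSCC n ε F c) :
    IsBasicSCC n (2 * ε) (F.erase (F.min' hne))
      (fun i => c i / ∑ j ∈ F.erase (F.min' hne), c j) := by
  obtain ⟨h1, h2, h3, h4⟩ := hscc
  obtain ⟨m, rfl⟩ : ∃ m, n = m + 1 := by
    cases n with
    | zero =>
      have hc : F.card ≤ 1 := h1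
      omega
    | succ m => exact ⟨m, rfl⟩
  set M := F.min' hne with hMdef
  have hM : M ∈ F := F.min'_mem hne
  have hM1 : 1 ≤ M := Schreier_pos h1 hM
  have hsing : ({M} : Finset ℕ) ∈ Schreier m := singleton_mem_Schreier m M hM1
  have hcM : c M < ε := by
    have := h4 {M} (by simpa using hM) hsing
    simpa using this
  set s := ∑ j ∈ F.erase M, c j with hsdef
  have hs : c M + s = 1 := by rw [hsdef, Finset.add_sum_erase F c hM, h3]
  have hs_half : 1 / 2 < s := by linarith
  have hs_pos : 0 < s := by linarith
  refine ⟨schreier_subset_closed _ F _ (Finset.erase_subset _ _) h1, ?_, ?_, ?_⟩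
  · intro k hk
    exact div_nonneg (h2 k (Finset.mem_of_mem_erase hk)) hs_pos.le
  · rw [← Finset.sum_div]
    exact div_self hs_pos.ne'
  · intro G hG hGS
    have hsum := h4 G (hG.trans (Finset.erase_subset _ _)) hGS
    rw [← Finset.sum_div, div_lt_iff₀ hs_pos]
    nlinarith
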